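/- arXiv:2411.12522 — 3 statements merged into one kernel-verified Lean document; each statement's English description precedes it below -/
import Mathlib

section
/- Let Z be a finite set and let J be a subset of {(j,k) ∈ Z × Z : j ≠ k}. Suppose every cyclic sequence i_0 ≠ i_1 ≠ ... ≠ i_n with i_0 = i_n of states in Z contains at least one consecutive pair (i_{l-1}, i_l) belonging to J. Then for any finite walk i_0 ≠ i_1 ≠ ... ≠ i_n in Z (consecutive states distinct), the number of indices l with (i_{l-1}, i_l) ∉ J is at most |Z| - 1 + (|Z| - 1) * (number of indices l with (i_{l-1}, i_l) ∈ J); equivalently n ≤ |Z| - 1 + |Z| * #{l : (i_{l-1}, i_l) ∈ J}. -/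
/-- Combinatorial non-explosion lemma: if the transition set `J` hits every
cycle in the finite state space `Z`, then along any walk with distinct
consecutive states, the total length `n` is bounded by
`|Z| - 1 + |Z| * #{steps lying in J}`. -/
theorem stmt_2 {Z : Type*} [Fintype Z] (J : Set (Z × Z))
    (hJ : ∀ p ∈ J, p.1 ≠ p.2)
    (hcyc : ∀ (n : ℕ) (c : ℕ → Z), 0 < n → (∀ l < n, c l ≠ c (l + 1)) →
      c 0 = c n → ∃ l < n, (c l, c (l + 1)) ∈ J)
    (n : ℕ) (i : ℕ → Z) (hwalk : ∀ l < n, i l ≠ i (l + 1)) :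
    Set.ncard {l : ℕ | l < n ∧ (i l, i (l + 1)) ∉ J}
      ≤ Fintype.card Z - 1
        + (Fintype.card Z - 1) * Set.ncard {l : ℕ | l < n ∧ (i l, i (l + 1)) ∈ J} ∧
    n ≤ Fintype.card Z - 1
        + Fintype.card Z * Set.ncard {l : ℕ | l < n ∧ (i l, i (l + 1)) ∈ J} := by
  classical
  set m := Fintype.card Z with hm
  have hm1 : 1 ≤ m := Fintype.card_pos_iff.mpr ⟨i 0⟩
  -- If a segment of the walk contains no J-step, its states are all distinct.
  have norep : ∀ a b : ℕ, a ≤ b → (∀ l, a ≤ l → l < b → i l ≠ i (l + 1)) →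
      (∀ l, a ≤ l → l < b → (i l, i (l + 1)) ∉ J) → b - a + 1 ≤ m := by
    intro a b hab hw hnJ
    have hinj : ∀ p q, a ≤ p → p < q → q ≤ b → i p ≠ i q := by
      intro p q hap hpq hqb heq
      obtain ⟨l, hl, hlJ⟩ := hcyc (q - p) (fun l => i (p + l)) (by omega)
        (by
          intro l hl
          have := hw (p + l) (by omega) (by omega)
          simpa [Nat.add_assoc] using this)
        (by show i (p + 0) = i (p + (q - p)); rw [Nat.add_sub_cancel' (le_of_lt hpq)]; exact heq)
      have h1 : p + l + 1 = p + (l + 1) := by omega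
      exact hnJ (p + l) (by omega) (by omega) (by rw [h1]; exact hlJ)
    have : Fintype.card (Fin (b - a + 1)) ≤ m := by
      apply Fintype.card_le_of_injective (fun x => i (a + x.1))
      intro x y hxy
      by_contra hne
      rcases Nat.lt_or_ge x.1 y.1 with h | h
      · exact hinj (a + x.1) (a + y.1) (by omega) (by omega) (by omega) hxy
      · have h' : y.1 < x.1 := by
          rcases Nat.lt_or_ge y.1 x.1 with h' | h'
          · exact h'
          · exact absurd (Fin.ext (by omega)) hne
        exact hinj (a + y.1) (a + x.1) (by omega) (by omega) (by omega) hxy.symm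
    simpa using this
  -- Main bound by strong induction
  have main : ∀ N, (∀ l < N, i l ≠ i (l + 1)) →
      N ≤ m - 1 + m * ((Finset.range N).filter (fun l => (i l, i (l + 1)) ∈ J)).card := by
    intro N
    induction N using Nat.strong_induction_on with
    | _ N ih =>
      intro hw
      by_cases hex : ((Finset.range N).filter (fun l => (i l, i (l + 1)) ∈ J)).Nonempty
      · set S := (Finset.range N).filter (fun l => (i l, i (l + 1)) ∈ J) with hS
        set l0 := S.max' hex with hl0
        have hl0S : l0 ∈ S := S.max'_mem hex
        have hl0n : l0 < N := (Finset.mem_filter.mp hl0S).1 |> Finset.mem_range.mp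
        have hmax : ∀ x ∈ S, x ≤ l0 := fun x hx => S.le_max' x hx
        -- no J-steps after l0
        have htail : N - (l0 + 1) + 1 ≤ m := by
          apply norep (l0 + 1) N (by omega)
          · intro l h1 h2; exact hw l h2
          · intro l h1 h2 hmem
            have : l ∈ S := Finset.mem_filter.mpr ⟨Finset.mem_range.mpr h2, hmem⟩
            have := hmax l this
            omega
        have hprefix := ih l0 hl0n (fun l hl => hw l (by omega))
        set k' := ((Finset.range l0).filter (fun l => (i l, i (l + 1)) ∈ J)).card with hk'
        have hsub : (Finset.range l0).filter (fun l => (i l, i (l + 1)) ∈ J) ⊆ S.erase l0 := by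
          intro x hx
          rcases Finset.mem_filter.mp hx with ⟨hx1, hx2⟩
          have hxl0 : x < l0 := Finset.mem_range.mp hx1
          exact Finset.mem_erase.mpr ⟨by omega, Finset.mem_filter.mpr
            ⟨Finset.mem_range.mpr (by omega), hx2⟩⟩
        have hcard : k' + 1 ≤ S.card := by
          have h1 := Finset.card_le_card hsub
          have h2 : (S.erase l0).card = S.card - 1 := Finset.card_erase_of_mem hl0S
          have h3 : 1 ≤ S.card := Finset.card_pos.mpr hex
          omega
        have hmul : m * (k' + 1) ≤ m * S.card := Nat.mul_le_mul_left m hcard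
        have : m * (k' + 1) = m * k' + m := by ring
        omega
      · have h0 := norep 0 N (Nat.zero_le N) (fun l _ h2 => hw l h2)
          (fun l _ h2 hmem => hex ⟨l, Finset.mem_filter.mpr ⟨Finset.mem_range.mpr h2, hmem⟩⟩)
        omega
  have hmain := main n hwalk
  -- convert ncard to Finset card
  have hJeq : {l : ℕ | l < n ∧ (i l, i (l + 1)) ∈ J} =
      ↑((Finset.range n).filter (fun l => (i l, i (l + 1)) ∈ J)) := by
    ext x; simp [Finset.mem_filter]
  have hNeq : {l : ℕ | l < n ∧ (i l, i (l + 1)) ∉ J} =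
      ↑((Finset.range n).filter (fun l => (i l, i (l + 1)) ∉ J)) := by
    ext x; simp [Finset.mem_filter]
  rw [hJeq, hNeq, Set.ncard_coe_finset, Set.ncard_coe_finset]
  set cJ := ((Finset.range n).filter (fun l => (i l, i (l + 1)) ∈ J)).card with hcJ
  set cN := ((Finset.range n).filter (fun l => (i l, i (l + 1)) ∉ J)).card with hcN
  have hsum : cJ + cN = n := by
    rw [hcJ, hcN]
    simpa using Finset.card_filter_add_card_filter_not
      (s := Finset.range n) (p := fun l => (i l, i (l + 1)) ∈ J)
  have hmm : (m - 1) * cJ + cJ = m * cJ := by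
    have : m - 1 + 1 = m := by omega
    calc (m - 1) * cJ + cJ = (m - 1 + 1) * cJ := by ring
    _ = m * cJ := by rw [this]
  omega
end

section
/- Let Λ : [s, ρ) → [0,∞) be right-continuous, nondecreasing, with Λ(s) = 0 and jumps ΔΛ ≤ 1, with continuous part Λ_c. Define p(t) = exp(-(Λ_c(t) - Λ_c(s))) * ∏_{s<u≤t}(1 - ΔΛ(u)) and q(t) = ∫_{(s,t]} p(u-) dΛ(u). Then q(t) = 1 - p(t) for all t ∈ [s,ρ); in particular 0 ≤ p(t) ≤ 1 and 0 ≤ q(t) ≤ 1. -/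
open MeasureTheory Set Function

open Filter Topology
set_option maxHeartbeats 1000000


section Prod01
variable {ι : Type*} {f : ι → ℝ}

lemma prod01_finset_nonneg (hf : ∀ i, f i ∈ Set.Icc (0:ℝ) 1) (F : Finset ι) :
    0 ≤ ∏ i ∈ F, f i :=
  Finset.prod_nonneg fun i _ => (hf i).1

lemma prod01_finset_le_one (hf : ∀ i, f i ∈ Set.Icc (0:ℝ) 1) (F : Finset ι) :
    ∏ i ∈ F, f i ≤ 1 :=
  Finset.prod_le_one (fun i _ => (hf i).1) (fun i _ => (hf i).2)

lemma prod01_anti [DecidableEq ι] (hf : ∀ i, f i ∈ Set.Icc (0:ℝ) 1) :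
    Antitone (fun F : Finset ι => ∏ i ∈ F, f i) := by
  intro F G hFG
  have := Finset.prod_sdiff (f := f) hFG
  calc ∏ i ∈ G, f i = (∏ i ∈ G \ F, f i) * ∏ i ∈ F, f i := this.symm
    _ ≤ 1 * ∏ i ∈ F, f i := by
        apply mul_le_mul_of_nonneg_right (prod01_finset_le_one hf _)
          (prod01_finset_nonneg hf _)
    _ = ∏ i ∈ F, f i := one_mul _

lemma prod01_hasProd (hf : ∀ i, f i ∈ Set.Icc (0:ℝ) 1) :
    HasProd f (⨅ F : Finset ι, ∏ i ∈ F, f i) := by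
  classical
  exact tendsto_atTop_ciInf (prod01_anti hf)
    ⟨0, by rintro x ⟨F, rfl⟩; exact prod01_finset_nonneg hf F⟩

lemma prod01_multipliable (hf : ∀ i, f i ∈ Set.Icc (0:ℝ) 1) : Multipliable f :=
  (prod01_hasProd hf).multipliable

lemma prod01_tprod_eq (hf : ∀ i, f i ∈ Set.Icc (0:ℝ) 1) :
    ∏' i, f i = ⨅ F : Finset ι, ∏ i ∈ F, f i :=
  (prod01_hasProd hf).tprod_eq

lemma prod01_tprod_le_finset (hf : ∀ i, f i ∈ Set.Icc (0:ℝ) 1) (F : Finset ι) :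
    ∏' i, f i ≤ ∏ i ∈ F, f i := by
  rw [prod01_tprod_eq hf]
  exact ciInf_le ⟨0, by rintro x ⟨G, rfl⟩; exact prod01_finset_nonneg hf G⟩ F

lemma prod01_tprod_nonneg (hf : ∀ i, f i ∈ Set.Icc (0:ℝ) 1) : 0 ≤ ∏' i, f i :=
  ge_of_tendsto' ((prod01_hasProd hf).multipliable.hasProd)
    fun F => prod01_finset_nonneg hf F

lemma prod01_tprod_le_one (hf : ∀ i, f i ∈ Set.Icc (0:ℝ) 1) : ∏' i, f i ≤ 1 := by
  simpa using prod01_tprod_le_finset hf ∅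

lemma prod01_exists_finset_lt (hf : ∀ i, f i ∈ Set.Icc (0:ℝ) 1) {c : ℝ}
    (hc : ∏' i, f i < c) : ∃ F : Finset ι, ∏ i ∈ F, f i < c := by
  rw [prod01_tprod_eq hf] at hc
  exact exists_lt_of_ciInf_lt hc

end Prod01

section Prod01b
variable {ι : Type*}

lemma weierstrass_finset (Δ : ι → ℝ) (h : ∀ i, Δ i ∈ Set.Icc (0:ℝ) 1) (F : Finset ι) :
    1 - ∑ i ∈ F, Δ i ≤ ∏ i ∈ F, (1 - Δ i) := by
  classical
  induction F using Finset.cons_induction with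
  | empty => simp
  | cons a F ha ih =>
    rw [Finset.prod_cons, Finset.sum_cons]
    have hS : 0 ≤ ∑ i ∈ F, Δ i := Finset.sum_nonneg fun i _ => (h i).1
    nlinarith [(h a).1, (h a).2, ih]

lemma one_sub_mem (h : ∀ i, (Δ : ι → ℝ) i ∈ Set.Icc (0:ℝ) 1) :
    ∀ i, (1 - Δ i) ∈ Set.Icc (0:ℝ) 1 :=
  fun i => ⟨by linarith [(h i).2], by linarith [(h i).1]⟩

lemma prod01_one_sub_ge (Δ : ι → ℝ) (h : ∀ i, Δ i ∈ Set.Icc (0:ℝ) 1) (hs : Summable Δ) :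
    1 - ∑' i, Δ i ≤ ∏' i, (1 - Δ i) := by
  refine ge_of_tendsto' ((prod01_multipliable (one_sub_mem h)).hasProd) fun F => ?_
  have h1 : ∑ i ∈ F, Δ i ≤ ∑' i, Δ i := Summable.sum_le_tsum F (fun i _ => (h i).1) hs
  calc 1 - ∑' i, Δ i ≤ 1 - ∑ i ∈ F, Δ i := by linarith
    _ ≤ _ := weierstrass_finset Δ h F

lemma prod01_one_sub_le_exp (Δ : ι → ℝ) (h : ∀ i, Δ i ∈ Set.Icc (0:ℝ) 1) (hs : Summable Δ) :
    ∏' i, (1 - Δ i) ≤ Real.exp (-∑' i, Δ i) := by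
  have h2 : Filter.Tendsto (fun F : Finset ι => Real.exp (-∑ i ∈ F, Δ i))
      Filter.atTop (𝓝 (Real.exp (-∑' i, Δ i))) := by simpa [Finset.sum_neg_distrib, Function.comp_def] using
      (Real.continuous_exp.continuousAt.tendsto).comp hs.hasSum.neg
  refine le_of_tendsto_of_tendsto' ((prod01_multipliable (one_sub_mem h)).hasProd) h2 fun F => ?_
  calc ∏ i ∈ F, (1 - Δ i) ≤ ∏ i ∈ F, Real.exp (-Δ i) := by
        refine Finset.prod_le_prod (fun i _ => (one_sub_mem h i).1) fun i _ => ?_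
        linarith [Real.add_one_le_exp (-Δ i)]
    _ = Real.exp (∑ i ∈ F, -Δ i) := (Real.exp_sum F fun i => -Δ i).symm
    _ = Real.exp (-∑ i ∈ F, Δ i) := by rw [Finset.sum_neg_distrib]

lemma prod01_subset {β : Type*} {f : β → ℝ} {A B : Set β} (hAB : A ⊆ B)
    (hf : ∀ i ∈ B, f i ∈ Set.Icc (0:ℝ) 1) :
    ∏' i : B, f i ≤ ∏' i : A, f i := by
  have hA : ∀ i : A, f i ∈ Set.Icc (0:ℝ) 1 := fun i => hf i (hAB i.2)
  have hBA : ∀ i : (B \ A : Set β), f i ∈ Set.Icc (0:ℝ) 1 := fun i => hf i i.2.1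
  have hsplit : (A ∪ (B \ A) : Set β) = B := Set.union_diff_cancel hAB
  have heq := Multipliable.tprod_union_disjoint (f := f) (disjoint_sdiff_self_right)
    (prod01_multipliable hA) (prod01_multipliable hBA)
  rw [hsplit] at heq
  rw [heq]
  calc (∏' i : A, f i) * ∏' i : (B \ A : Set β), f i
      ≤ (∏' i : A, f i) * 1 :=
        mul_le_mul_of_nonneg_left (prod01_tprod_le_one hBA) (prod01_tprod_nonneg hA)
    _ = _ := mul_one _

end Prod01b

section Jump
open scoped ENNReal

/-- finite sums of jumps inside `(a,b]` are bounded by the increment -/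
lemma jump_finset_sum_le (Λ : StieltjesFunction ℝ) {a b : ℝ} (hab : a ≤ b)
    (F : Finset ℝ) (hF : ↑F ⊆ Set.Ioc a b) :
    ∑ u ∈ F, ((Λ : ℝ → ℝ) u - leftLim (Λ : ℝ → ℝ) u) ≤ Λ b - Λ a := by
  have h0 : ∀ u : ℝ, 0 ≤ (Λ : ℝ → ℝ) u - leftLim (Λ : ℝ → ℝ) u :=
    fun u => sub_nonneg.2 (Λ.mono.leftLim_le le_rfl)
  have hm : Λ.measure ↑F = ∑ u ∈ F, Λ.measure {u} := by
    rw [show (↑F : Set ℝ) = ⋃ u ∈ F, {u} by ext x; simp]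
    exact measure_biUnion_finset (fun i _ j _ hij => by simp [Set.disjoint_singleton, hij])
      (fun i _ => measurableSet_singleton i)
  have hle : Λ.measure ↑F ≤ Λ.measure (Set.Ioc a b) :=
    measure_mono hF
  rw [hm, Λ.measure_Ioc] at hle
  simp only [Λ.measure_singleton] at hle
  rw [← ENNReal.ofReal_sum_of_nonneg (fun u _ => h0 u)] at hle
  have := (ENNReal.ofReal_le_ofReal_iff (by linarith [Λ.mono hab])).1 hle
  exact this

lemma jump_summable (Λ : StieltjesFunction ℝ) {a b : ℝ} (hab : a ≤ b) :
    Summable (fun u : Set.Ioc a b => (Λ : ℝ → ℝ) u.1 - leftLim (Λ : ℝ → ℝ) u.1) := by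
  have h0 : ∀ u : ℝ, 0 ≤ (Λ : ℝ → ℝ) u - leftLim (Λ : ℝ → ℝ) u :=
    fun u => sub_nonneg.2 (Λ.mono.leftLim_le le_rfl)
  apply summable_of_sum_le
    (f := fun u : Set.Ioc a b => (Λ : ℝ → ℝ) u.1 - leftLim (Λ : ℝ → ℝ) u.1)
    (fun u => h0 u.1)
  intro G
  have : ∑ u ∈ G, ((Λ : ℝ → ℝ) u.1 - leftLim (Λ : ℝ → ℝ) u.1)
      = ∑ u ∈ G.image Subtype.val, ((Λ : ℝ → ℝ) u - leftLim (Λ : ℝ → ℝ) u) := by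
    rw [Finset.sum_image (fun x _ y _ h => Subtype.val_injective h)]
  rw [this]
  apply jump_finset_sum_le Λ hab
  intro x hx
  simp only [Finset.coe_image, Set.mem_image] at hx
  obtain ⟨u, _, rfl⟩ := hx
  exact u.2

lemma jump_tsum_le (Λ : StieltjesFunction ℝ) {a b : ℝ} (hab : a ≤ b) :
    ∑' u : Set.Ioc a b, ((Λ : ℝ → ℝ) u.1 - leftLim (Λ : ℝ → ℝ) u.1) ≤ Λ b - Λ a := by
  apply Summable.tsum_le_of_sum_le (jump_summable Λ hab)
  intro G
  have : ∑ u ∈ G, ((Λ : ℝ → ℝ) u.1 - leftLim (Λ : ℝ → ℝ) u.1)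
      = ∑ u ∈ G.image Subtype.val, ((Λ : ℝ → ℝ) u - leftLim (Λ : ℝ → ℝ) u) := by
    rw [Finset.sum_image (fun x _ y _ h => Subtype.val_injective h)]
  rw [this]
  apply jump_finset_sum_le Λ hab
  intro x hx
  simp only [Finset.coe_image, Set.mem_image] at hx
  obtain ⟨u, _, rfl⟩ := hx
  exact u.2

end Jump

/-- the core numeric estimate -/
lemma expprod_bounds {c j w : ℝ} (hc : 0 ≤ c) (hj : 0 ≤ j) (hw0 : 0 ≤ w)
    (hw1 : 1 - j ≤ w) (hw2 : w ≤ Real.exp (-j)) :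
    1 - (c + j) ≤ Real.exp (-c) * w ∧
      Real.exp (-c) * w ≤ 1 - (c + j) + (c + j) ^ 2 := by
  constructor
  · rcases le_or_gt (1 - (c+j)) 0 with h | h
    · exact h.trans (mul_nonneg (Real.exp_pos _).le hw0)
    · have hc1 : c ≤ 1 := by linarith
      have h1 : (1 - c) ≤ Real.exp (-c) := by linarith [Real.add_one_le_exp (-c)]
      have h2 : (1 - c) * (1 - j) ≤ Real.exp (-c) * w := by
        apply mul_le_mul h1 hw1 (by linarith) (Real.exp_pos _).le
      nlinarith
  · have hup : Real.exp (-c) * w ≤ Real.exp (-(c + j)) := by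
      calc Real.exp (-c) * w ≤ Real.exp (-c) * Real.exp (-j) :=
            mul_le_mul_of_nonneg_left hw2 (Real.exp_pos _).le
        _ = Real.exp (-(c+j)) := by rw [← Real.exp_add]; ring_nf
    refine hup.trans ?_
    set D := c + j with hD
    have hD0 : 0 ≤ D := by positivity
    have h1 : D + 1 ≤ Real.exp D := Real.add_one_le_exp D
    have h2 : Real.exp (-D) * Real.exp D = 1 := by
      rw [← Real.exp_add]; simp
    nlinarith [Real.exp_pos (-D), Real.exp_pos D]

noncomputable section MainDefs

/-- jump of `Λ` -/
def Jf (Λ : StieltjesFunction ℝ) : ℝ → ℝ :=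
  fun u => (Λ : ℝ → ℝ) u - leftLim (Λ : ℝ → ℝ) u

/-- survival function (closed product over `(s,t]`) -/
def Pf (Λ : StieltjesFunction ℝ) (Λc : ℝ → ℝ) (s t : ℝ) : ℝ :=
  Real.exp (-(Λc t - Λc s)) * ∏' u : Set.Ioc s t, (1 - Jf Λ u.1)

/-- left limit version (open product over `(s,t)`) -/
def Lf (Λ : StieltjesFunction ℝ) (Λc : ℝ → ℝ) (s t : ℝ) : ℝ :=
  Real.exp (-(Λc t - Λc s)) * ∏' u : Set.Ioo s t, (1 - Jf Λ u.1)

end MainDefs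

section MainLemmas

variable {s ρ : ℝ} {Λ : StieltjesFunction ℝ} {Λc : ℝ → ℝ}

lemma Jf_nonneg (Λ : StieltjesFunction ℝ) (u : ℝ) : 0 ≤ Jf Λ u :=
  sub_nonneg.2 (Λ.mono.leftLim_le le_rfl)

lemma Jf_mem01 (hjump : ∀ u ∈ Set.Ioo s ρ, (Λ : ℝ → ℝ) u - leftLim (Λ : ℝ → ℝ) u ≤ 1)
    {u : ℝ} (hu : u ∈ Set.Ioo s ρ) : Jf Λ u ∈ Set.Icc (0:ℝ) 1 :=
  ⟨Jf_nonneg Λ u, hjump u hu⟩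

lemma factor_mem01 (hjump : ∀ u ∈ Set.Ioo s ρ, (Λ : ℝ → ℝ) u - leftLim (Λ : ℝ → ℝ) u ≤ 1)
    {A : Set ℝ} (hA : A ⊆ Set.Ioo s ρ) :
    ∀ u : A, (1 - Jf Λ u.1) ∈ Set.Icc (0:ℝ) 1 :=
  fun u => one_sub_mem (Δ := fun v : A => Jf Λ v.1) (fun v => Jf_mem01 hjump (hA v.2)) u

lemma factor_mem01' (hjump : ∀ u ∈ Set.Ioo s ρ, (Λ : ℝ → ℝ) u - leftLim (Λ : ℝ → ℝ) u ≤ 1) :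
    ∀ u ∈ Set.Ioo s ρ, (1 - Jf Λ u) ∈ Set.Icc (0:ℝ) 1 := by
  intro u hu
  have := Jf_mem01 hjump hu
  exact ⟨by linarith [this.2], by linarith [this.1]⟩

end MainLemmas

section Splits

lemma tsum_Ioc_split {f : ℝ → ℝ} {a b c : ℝ} (hab : a ≤ b) (hbc : b ≤ c)
    (h1 : Summable fun u : Set.Ioc a b => f u.1)
    (h2 : Summable fun u : Set.Ioc b c => f u.1) :
    ∑' u : Set.Ioc a c, f u.1
      = (∑' u : Set.Ioc a b, f u.1) + ∑' u : Set.Ioc b c, f u.1 := by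
  have := Summable.tsum_union_disjoint (f := f) (Set.Ioc_disjoint_Ioc_of_le le_rfl) h1 h2
  rwa [Set.Ioc_union_Ioc_eq_Ioc hab hbc] at this

lemma tsum_Ioc_split_singleton {f : ℝ → ℝ} {a b : ℝ} (hab : a < b)
    (h1 : Summable fun u : Set.Ioo a b => f u.1) :
    ∑' u : Set.Ioc a b, f u.1 = (∑' u : Set.Ioo a b, f u.1) + f b := by
  have hd : Disjoint (Set.Ioo a b) ({b} : Set ℝ) := by
    simp [Set.disjoint_singleton_right]
  have h2 : Summable fun u : ({b} : Set ℝ) => f u.1 := by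
    apply Set.Finite.summable
    exact Set.finite_singleton b
  have := Summable.tsum_union_disjoint (f := f) hd h1 h2
  rw [show Set.Ioo a b ∪ {b} = Set.Ioc a b by
    rw [← Set.Icc_self b, Set.Ioo_union_Icc_eq_Ioc hab le_rfl]] at this
  rw [this, tsum_singleton]

lemma tprod_Ioc_split {f : ℝ → ℝ} {a b c : ℝ} (hab : a ≤ b) (hbc : b ≤ c)
    (h1 : ∀ u : Set.Ioc a b, f u.1 ∈ Set.Icc (0:ℝ) 1)
    (h2 : ∀ u : Set.Ioc b c, f u.1 ∈ Set.Icc (0:ℝ) 1) :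
    ∏' u : Set.Ioc a c, f u.1
      = (∏' u : Set.Ioc a b, f u.1) * ∏' u : Set.Ioc b c, f u.1 := by
  have := Multipliable.tprod_union_disjoint (f := f) (Set.Ioc_disjoint_Ioc_of_le le_rfl)
    (prod01_multipliable h1) (prod01_multipliable h2)
  rwa [Set.Ioc_union_Ioc_eq_Ioc hab hbc] at this

lemma tprod_Ioc_split_singleton {f : ℝ → ℝ} {a b : ℝ} (hab : a < b)
    (h1 : ∀ u : Set.Ioo a b, f u.1 ∈ Set.Icc (0:ℝ) 1) :
    ∏' u : Set.Ioc a b, f u.1 = (∏' u : Set.Ioo a b, f u.1) * f b := by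
  have hd : Disjoint (Set.Ioo a b) ({b} : Set ℝ) := by
    simp [Set.disjoint_singleton_right]
  have h2 : Multipliable fun u : ({b} : Set ℝ) => f u.1 := by
    apply Set.Finite.multipliable
    exact Set.finite_singleton b
  have := Multipliable.tprod_union_disjoint (f := f) hd
    (prod01_multipliable h1) h2
  rw [show Set.Ioo a b ∪ {b} = Set.Ioc a b by
    rw [← Set.Icc_self b, Set.Ioo_union_Icc_eq_Ioc hab le_rfl]] at this
  rw [this, tprod_singleton]

lemma tprod_Ioc_split_open {f : ℝ → ℝ} {a b c : ℝ} (hab : a ≤ b) (hbc : b < c)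
    (h1 : ∀ u : Set.Ioc a b, f u.1 ∈ Set.Icc (0:ℝ) 1)
    (h2 : ∀ u : Set.Ioo b c, f u.1 ∈ Set.Icc (0:ℝ) 1) :
    ∏' u : Set.Ioo a c, f u.1
      = (∏' u : Set.Ioc a b, f u.1) * ∏' u : Set.Ioo b c, f u.1 := by
  have hd : Disjoint (Set.Ioc a b) (Set.Ioo b c) := by
    apply Set.disjoint_left.2
    rintro x ⟨_, hx2⟩ ⟨hx3, _⟩
    exact absurd hx2 (not_le.2 hx3)
  have := Multipliable.tprod_union_disjoint (f := f) hd
    (prod01_multipliable h1) (prod01_multipliable h2)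
  rwa [Set.Ioc_union_Ioo_eq_Ioo hab hbc] at this

end Splits

section Core

variable {s ρ : ℝ} {Λ : StieltjesFunction ℝ} {Λc : ℝ → ℝ}

lemma Lc_incr (hdc : ∀ t ∈ Set.Ico s ρ,
      (Λ : ℝ → ℝ) t = Λ s + (Λc t - Λc s) + ∑' u : (Set.Ioc s t), Jf Λ u.1)
    {a b : ℝ} (hsa : s ≤ a) (hab : a ≤ b) (hbρ : b < ρ) :
    Λc b - Λc a = (Λ b - Λ a) - ∑' u : Set.Ioc a b, Jf Λ u.1 := by
  have h1 := hdc a ⟨hsa, lt_of_le_of_lt hab hbρ⟩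
  have h2 := hdc b ⟨hsa.trans hab, hbρ⟩
  have h3 : ∑' u : Set.Ioc s b, Jf Λ u.1
      = (∑' u : Set.Ioc s a, Jf Λ u.1) + ∑' u : Set.Ioc a b, Jf Λ u.1 :=
    tsum_Ioc_split hsa hab (jump_summable Λ hsa) (jump_summable Λ hab)
  rw [h3] at h2
  linarith

lemma Lc_incr_nonneg (hdc : ∀ t ∈ Set.Ico s ρ,
      (Λ : ℝ → ℝ) t = Λ s + (Λc t - Λc s) + ∑' u : (Set.Ioc s t), Jf Λ u.1)
    {a b : ℝ} (hsa : s ≤ a) (hab : a ≤ b) (hbρ : b < ρ) :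
    0 ≤ Λc b - Λc a := by
  rw [Lc_incr hdc hsa hab hbρ, sub_nonneg]
  exact jump_tsum_le Λ hab

lemma Ioc_subset_Ioo_main {a b : ℝ} (hsa : s ≤ a) (hbρ : b < ρ) :
    Set.Ioc a b ⊆ Set.Ioo s ρ := fun x hx =>
  ⟨lt_of_le_of_lt hsa hx.1, lt_of_le_of_lt hx.2 hbρ⟩

lemma Ioo_subset_Ioo_main {a b : ℝ} (hsa : s ≤ a) (hbρ : b ≤ ρ) :
    Set.Ioo a b ⊆ Set.Ioo s ρ := fun x hx =>
  ⟨lt_of_le_of_lt hsa hx.1, lt_of_lt_of_le hx.2 hbρ⟩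

lemma Pf_mul (hjump : ∀ u ∈ Set.Ioo s ρ, (Λ : ℝ → ℝ) u - leftLim (Λ : ℝ → ℝ) u ≤ 1)
    {a b : ℝ} (hsa : s ≤ a) (hab : a ≤ b) (hbρ : b < ρ) :
    Pf Λ Λc s b = Pf Λ Λc s a
      * (Real.exp (-(Λc b - Λc a)) * ∏' u : Set.Ioc a b, (1 - Jf Λ u.1)) := by
  have h1 := factor_mem01 hjump (Ioc_subset_Ioo_main le_rfl (lt_of_le_of_lt hab hbρ))
  have h2 := factor_mem01 hjump (Ioc_subset_Ioo_main hsa hbρ)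
  unfold Pf
  rw [tprod_Ioc_split (f := fun x => 1 - Jf Λ x) hsa hab h1 h2,
    show Real.exp (-(Λc b - Λc s)) = Real.exp (-(Λc a - Λc s)) * Real.exp (-(Λc b - Λc a)) by
      rw [← Real.exp_add]; ring_nf]
  ring

lemma Lf_mul (hjump : ∀ u ∈ Set.Ioo s ρ, (Λ : ℝ → ℝ) u - leftLim (Λ : ℝ → ℝ) u ≤ 1)
    {a b : ℝ} (hsa : s ≤ a) (hab : a < b) (hbρ : b < ρ) :
    Lf Λ Λc s b = Pf Λ Λc s a
      * (Real.exp (-(Λc b - Λc a)) * ∏' u : Set.Ioo a b, (1 - Jf Λ u.1)) := by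
  have h1 := factor_mem01 hjump (Ioc_subset_Ioo_main le_rfl (lt_of_le_of_lt hab.le hbρ))
  have h2 := factor_mem01 hjump (Ioo_subset_Ioo_main hsa hbρ.le)
  unfold Lf Pf
  rw [tprod_Ioc_split_open (f := fun x => 1 - Jf Λ x) hsa hab h1 h2,
    show Real.exp (-(Λc b - Λc s)) = Real.exp (-(Λc a - Λc s)) * Real.exp (-(Λc b - Λc a)) by
      rw [← Real.exp_add]; ring_nf]
  ring

lemma Pf_point (hjump : ∀ u ∈ Set.Ioo s ρ, (Λ : ℝ → ℝ) u - leftLim (Λ : ℝ → ℝ) u ≤ 1)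
    {u : ℝ} (hu : u ∈ Set.Ioo s ρ) :
    Pf Λ Λc s u = Lf Λ Λc s u * (1 - Jf Λ u) := by
  have h1 := factor_mem01 hjump (Ioo_subset_Ioo_main le_rfl hu.2.le)
  unfold Pf Lf
  rw [tprod_Ioc_split_singleton (f := fun x => 1 - Jf Λ x) hu.1 h1]
  ring

end Core

section Core2

variable {s ρ : ℝ} {Λ : StieltjesFunction ℝ} {Λc : ℝ → ℝ}

lemma jump_summable_Ioo (Λ : StieltjesFunction ℝ) {a b : ℝ} (hab : a ≤ b) :
    Summable (fun u : Set.Ioo a b => Jf Λ u.1) := by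
  have h0 : ∀ u : ℝ, 0 ≤ Jf Λ u := Jf_nonneg Λ
  apply summable_of_sum_le (f := fun u : Set.Ioo a b => Jf Λ u.1) (fun u => h0 u.1)
  intro G
  have : ∑ u ∈ G, Jf Λ u.1
      = ∑ u ∈ G.image Subtype.val, Jf Λ u := by
    rw [Finset.sum_image (fun x _ y _ h => Subtype.val_injective h)]
  rw [this]
  apply jump_finset_sum_le Λ hab
  intro x hx
  simp only [Finset.coe_image, Set.mem_image] at hx
  obtain ⟨u, _, rfl⟩ := hx
  exact Set.Ioo_subset_Ioc_self u.2

lemma Gc_bounds (hjump : ∀ u ∈ Set.Ioo s ρ, (Λ : ℝ → ℝ) u - leftLim (Λ : ℝ → ℝ) u ≤ 1)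
    (hdc : ∀ t ∈ Set.Ico s ρ,
      (Λ : ℝ → ℝ) t = Λ s + (Λc t - Λc s) + ∑' u : (Set.Ioc s t), Jf Λ u.1)
    {a b : ℝ} (hsa : s ≤ a) (hab : a ≤ b) (hbρ : b < ρ) :
    0 ≤ Real.exp (-(Λc b - Λc a)) * ∏' u : Set.Ioc a b, (1 - Jf Λ u.1)
    ∧ Real.exp (-(Λc b - Λc a)) * (∏' u : Set.Ioc a b, (1 - Jf Λ u.1)) ≤ 1
    ∧ 1 - (Λ b - Λ a) ≤ Real.exp (-(Λc b - Λc a)) * ∏' u : Set.Ioc a b, (1 - Jf Λ u.1)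
    ∧ Real.exp (-(Λc b - Λc a)) * (∏' u : Set.Ioc a b, (1 - Jf Λ u.1))
        ≤ 1 - (Λ b - Λ a) + (Λ b - Λ a) ^ 2 := by
  have hmem : ∀ u : Set.Ioc a b, Jf Λ u.1 ∈ Set.Icc (0:ℝ) 1 :=
    fun u => Jf_mem01 hjump (Ioc_subset_Ioo_main hsa hbρ u.2)
  have hsum := jump_summable Λ (a := a) (b := b) hab
  have hw1 : 1 - (∑' u : Set.Ioc a b, Jf Λ u.1) ≤ ∏' u : Set.Ioc a b, (1 - Jf Λ u.1) :=
    prod01_one_sub_ge _ hmem hsum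
  have hw2 : (∏' u : Set.Ioc a b, (1 - Jf Λ u.1))
      ≤ Real.exp (-(∑' u : Set.Ioc a b, Jf Λ u.1)) :=
    prod01_one_sub_le_exp _ hmem hsum
  have hw0 : 0 ≤ ∏' u : Set.Ioc a b, (1 - Jf Λ u.1) :=
    prod01_tprod_nonneg (one_sub_mem hmem)
  have hc : 0 ≤ Λc b - Λc a := Lc_incr_nonneg hdc hsa hab hbρ
  have hj : 0 ≤ ∑' u : Set.Ioc a b, Jf Λ u.1 := tsum_nonneg fun u => Jf_nonneg Λ u.1
  have hcj : (Λc b - Λc a) + (∑' u : Set.Ioc a b, Jf Λ u.1) = Λ b - Λ a := by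
    rw [Lc_incr hdc hsa hab hbρ]; ring
  have hmain := expprod_bounds hc hj hw0 hw1 hw2
  rw [hcj] at hmain
  refine ⟨mul_nonneg (Real.exp_pos _).le hw0, ?_, hmain.1, hmain.2⟩
  have he1 : Real.exp (-(Λc b - Λc a)) ≤ 1 := by
    rw [← Real.exp_zero]
    exact Real.exp_le_exp.2 (by linarith)
  exact mul_le_one₀ he1 hw0 (prod01_tprod_le_one (one_sub_mem hmem))

lemma Go_bounds (hjump : ∀ u ∈ Set.Ioo s ρ, (Λ : ℝ → ℝ) u - leftLim (Λ : ℝ → ℝ) u ≤ 1)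
    (hdc : ∀ t ∈ Set.Ico s ρ,
      (Λ : ℝ → ℝ) t = Λ s + (Λc t - Λc s) + ∑' u : (Set.Ioc s t), Jf Λ u.1)
    {a b : ℝ} (hsa : s ≤ a) (hab : a < b) (hbρ : b < ρ) :
    0 ≤ Real.exp (-(Λc b - Λc a)) * ∏' u : Set.Ioo a b, (1 - Jf Λ u.1)
    ∧ Real.exp (-(Λc b - Λc a)) * (∏' u : Set.Ioo a b, (1 - Jf Λ u.1)) ≤ 1
    ∧ 1 - (leftLim (Λ : ℝ → ℝ) b - Λ a)
        ≤ Real.exp (-(Λc b - Λc a)) * ∏' u : Set.Ioo a b, (1 - Jf Λ u.1)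
    ∧ Real.exp (-(Λc b - Λc a)) * (∏' u : Set.Ioo a b, (1 - Jf Λ u.1))
        ≤ 1 - (leftLim (Λ : ℝ → ℝ) b - Λ a) + (leftLim (Λ : ℝ → ℝ) b - Λ a) ^ 2 := by
  have hmem : ∀ u : Set.Ioo a b, Jf Λ u.1 ∈ Set.Icc (0:ℝ) 1 :=
    fun u => Jf_mem01 hjump (Ioo_subset_Ioo_main hsa hbρ.le u.2)
  have hsum := jump_summable_Ioo Λ (a := a) (b := b) hab.le
  have hw1 : 1 - (∑' u : Set.Ioo a b, Jf Λ u.1) ≤ ∏' u : Set.Ioo a b, (1 - Jf Λ u.1) :=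
    prod01_one_sub_ge _ hmem hsum
  have hw2 : (∏' u : Set.Ioo a b, (1 - Jf Λ u.1))
      ≤ Real.exp (-(∑' u : Set.Ioo a b, Jf Λ u.1)) :=
    prod01_one_sub_le_exp _ hmem hsum
  have hw0 : 0 ≤ ∏' u : Set.Ioo a b, (1 - Jf Λ u.1) :=
    prod01_tprod_nonneg (one_sub_mem hmem)
  have hc : 0 ≤ Λc b - Λc a := Lc_incr_nonneg hdc hsa hab.le hbρ
  have hj : 0 ≤ ∑' u : Set.Ioo a b, Jf Λ u.1 := tsum_nonneg fun u => Jf_nonneg Λ u.1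
  have hsplit : ∑' u : Set.Ioc a b, Jf Λ u.1
      = (∑' u : Set.Ioo a b, Jf Λ u.1) + Jf Λ b :=
    tsum_Ioc_split_singleton (f := fun x => Jf Λ x) hab hsum
  have hcj : (Λc b - Λc a) + (∑' u : Set.Ioo a b, Jf Λ u.1)
      = leftLim (Λ : ℝ → ℝ) b - Λ a := by
    rw [Lc_incr hdc hsa hab.le hbρ, hsplit]
    simp only [Jf]
    ring
  have hmain := expprod_bounds hc hj hw0 hw1 hw2
  rw [hcj] at hmain
  refine ⟨mul_nonneg (Real.exp_pos _).le hw0, ?_, hmain.1, hmain.2⟩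
  have he1 : Real.exp (-(Λc b - Λc a)) ≤ 1 := by
    rw [← Real.exp_zero]
    exact Real.exp_le_exp.2 (by linarith)
  exact mul_le_one₀ he1 hw0 (prod01_tprod_le_one (one_sub_mem hmem))

lemma Pf_self (Λ : StieltjesFunction ℝ) (Λc : ℝ → ℝ) (s : ℝ) : Pf Λ Λc s s = 1 := by
  unfold Pf
  rw [Set.Ioc_self, tprod_empty]
  simp

lemma Pf_mem01 (hjump : ∀ u ∈ Set.Ioo s ρ, (Λ : ℝ → ℝ) u - leftLim (Λ : ℝ → ℝ) u ≤ 1)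
    (hdc : ∀ t ∈ Set.Ico s ρ,
      (Λ : ℝ → ℝ) t = Λ s + (Λc t - Λc s) + ∑' u : (Set.Ioc s t), Jf Λ u.1)
    {t : ℝ} (ht : t ∈ Set.Ico s ρ) : Pf Λ Λc s t ∈ Set.Icc (0:ℝ) 1 := by
  have h := Gc_bounds hjump hdc le_rfl ht.1 ht.2
  have := Pf_mul (Λc := Λc) hjump le_rfl ht.1 ht.2
  rw [Pf_self, one_mul] at this
  rw [this]
  exact ⟨h.1, h.2.1⟩

lemma Lf_mem01 (hjump : ∀ u ∈ Set.Ioo s ρ, (Λ : ℝ → ℝ) u - leftLim (Λ : ℝ → ℝ) u ≤ 1)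
    (hdc : ∀ t ∈ Set.Ico s ρ,
      (Λ : ℝ → ℝ) t = Λ s + (Λc t - Λc s) + ∑' u : (Set.Ioc s t), Jf Λ u.1)
    {t : ℝ} (ht : t ∈ Set.Ioo s ρ) : Lf Λ Λc s t ∈ Set.Icc (0:ℝ) 1 := by
  have h := Go_bounds hjump hdc le_rfl ht.1 ht.2
  have := Lf_mul (Λc := Λc) hjump le_rfl ht.1 ht.2
  rw [Pf_self, one_mul] at this
  rw [this]
  exact ⟨h.1, h.2.1⟩

lemma Pf_anti (hjump : ∀ u ∈ Set.Ioo s ρ, (Λ : ℝ → ℝ) u - leftLim (Λ : ℝ → ℝ) u ≤ 1)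
    (hdc : ∀ t ∈ Set.Ico s ρ,
      (Λ : ℝ → ℝ) t = Λ s + (Λc t - Λc s) + ∑' u : (Set.Ioc s t), Jf Λ u.1)
    {a b : ℝ} (hsa : s ≤ a) (hab : a ≤ b) (hbρ : b < ρ) :
    Pf Λ Λc s b ≤ Pf Λ Λc s a := by
  rw [Pf_mul (Λc := Λc) hjump hsa hab hbρ]
  have h := Gc_bounds hjump hdc hsa hab hbρ
  have hP := Pf_mem01 hjump hdc (t := a) ⟨hsa, lt_of_le_of_lt hab hbρ⟩
  calc Pf Λ Λc s a * _ ≤ Pf Λ Λc s a * 1 := mul_le_mul_of_nonneg_left h.2.1 hP.1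
    _ = Pf Λ Λc s a := mul_one _

lemma Pf_le_Lf (hjump : ∀ u ∈ Set.Ioo s ρ, (Λ : ℝ → ℝ) u - leftLim (Λ : ℝ → ℝ) u ≤ 1)
    (hdc : ∀ t ∈ Set.Ico s ρ,
      (Λ : ℝ → ℝ) t = Λ s + (Λc t - Λc s) + ∑' u : (Set.Ioc s t), Jf Λ u.1)
    {u : ℝ} (hu : u ∈ Set.Ioo s ρ) : Pf Λ Λc s u ≤ Lf Λ Λc s u := by
  rw [Pf_point (Λc := Λc) hjump hu]
  have hL := Lf_mem01 hjump hdc hu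
  calc Lf Λ Λc s u * (1 - Jf Λ u) ≤ Lf Λ Λc s u * 1 :=
        mul_le_mul_of_nonneg_left (by linarith [Jf_nonneg Λ u]) hL.1
    _ = Lf Λ Λc s u := mul_one _

lemma Lf_bounds (hjump : ∀ u ∈ Set.Ioo s ρ, (Λ : ℝ → ℝ) u - leftLim (Λ : ℝ → ℝ) u ≤ 1)
    (hdc : ∀ t ∈ Set.Ico s ρ,
      (Λ : ℝ → ℝ) t = Λ s + (Λc t - Λc s) + ∑' u : (Set.Ioc s t), Jf Λ u.1)
    {a b : ℝ} (hsa : s ≤ a) (hab : a < b) (hbρ : b < ρ) :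
    Pf Λ Λc s a * (1 - (leftLim (Λ : ℝ → ℝ) b - Λ a)) ≤ Lf Λ Λc s b
    ∧ Lf Λ Λc s b ≤ Pf Λ Λc s a
        * (1 - (leftLim (Λ : ℝ → ℝ) b - Λ a) + (leftLim (Λ : ℝ → ℝ) b - Λ a) ^ 2) := by
  have h := Go_bounds hjump hdc hsa hab hbρ
  have hP := Pf_mem01 hjump hdc (t := a) ⟨hsa, hab.trans hbρ⟩
  rw [Lf_mul (Λc := Λc) hjump hsa hab hbρ]
  exact ⟨mul_le_mul_of_nonneg_left h.2.2.1 hP.1,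
    mul_le_mul_of_nonneg_left h.2.2.2 hP.1⟩

lemma Pf_bounds (hjump : ∀ u ∈ Set.Ioo s ρ, (Λ : ℝ → ℝ) u - leftLim (Λ : ℝ → ℝ) u ≤ 1)
    (hdc : ∀ t ∈ Set.Ico s ρ,
      (Λ : ℝ → ℝ) t = Λ s + (Λc t - Λc s) + ∑' u : (Set.Ioc s t), Jf Λ u.1)
    {a b : ℝ} (hsa : s ≤ a) (hab : a ≤ b) (hbρ : b < ρ) :
    Pf Λ Λc s a * (1 - (Λ b - Λ a)) ≤ Pf Λ Λc s b
    ∧ Pf Λ Λc s b ≤ Pf Λ Λc s a * (1 - (Λ b - Λ a) + (Λ b - Λ a) ^ 2) := by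
  have h := Gc_bounds hjump hdc hsa hab hbρ
  have hP := Pf_mem01 hjump hdc (t := a) ⟨hsa, lt_of_le_of_lt hab hbρ⟩
  rw [Pf_mul (Λc := Λc) hjump hsa hab hbρ]
  exact ⟨mul_le_mul_of_nonneg_left h.2.2.1 hP.1,
    mul_le_mul_of_nonneg_left h.2.2.2 hP.1⟩

end Core2

section Core3

variable {s ρ : ℝ} {Λ : StieltjesFunction ℝ} {Λc : ℝ → ℝ}

lemma prod01_tprod_le_prod_of_subset {f : ℝ → ℝ} {A : Set ℝ}
    (hf : ∀ i ∈ A, f i ∈ Set.Icc (0:ℝ) 1) (F : Finset ℝ) (hFA : ↑F ⊆ A) :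
    ∏' i : A, f i ≤ ∏ i ∈ F, f i := by
  calc ∏' i : A, f i ≤ ∏' i : (↑F : Set ℝ), f i := prod01_subset hFA hf
    _ = ∏ i ∈ F, f i := Finset.tprod_subtype' F f

lemma tendsto_W (hjump : ∀ u ∈ Set.Ioo s ρ, (Λ : ℝ → ℝ) u - leftLim (Λ : ℝ → ℝ) u ≤ 1)
    {u : ℝ} (hu : u ∈ Set.Ioo s ρ) :
    Filter.Tendsto (fun v => ∏' w : Set.Ioc s v, (1 - Jf Λ w.1)) (nhdsWithin u (Set.Iio u))
      (nhds (∏' w : Set.Ioo s u, (1 - Jf Λ w.1))) := by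
  have hmemIoo : ∀ i ∈ Set.Ioo s u, (1 - Jf Λ i) ∈ Set.Icc (0:ℝ) 1 :=
    fun i hi => factor_mem01' hjump i (Ioo_subset_Ioo_main le_rfl hu.2.le hi)
  rw [tendsto_order]
  constructor
  · intro b hb
    filter_upwards [Ioo_mem_nhdsLT_of_mem ⟨hu.1, le_rfl⟩] with v hv
    have h1 : ∏' w : Set.Ioo s u, (1 - Jf Λ w.1) ≤ ∏' w : Set.Ioc s v, (1 - Jf Λ w.1) :=
      prod01_subset (A := Set.Ioc s v) (B := Set.Ioo s u)
        (fun x hx => ⟨hx.1, lt_of_le_of_lt hx.2 hv.2⟩) hmemIoo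
    exact lt_of_lt_of_le hb h1
  · intro b hb
    obtain ⟨F, hF⟩ := prod01_exists_finset_lt
      (f := fun w : Set.Ioo s u => 1 - Jf Λ w.1) (fun w => hmemIoo w.1 w.2) hb
    classical
    set F' : Finset ℝ := F.image Subtype.val with hF'def
    have hF'prod : ∏ x ∈ F', (1 - Jf Λ x) = ∏ i ∈ F, (1 - Jf Λ i.1) :=
      Finset.prod_image (fun x _ y _ h => Subtype.val_injective h)
    have hF'sub : ↑F' ⊆ Set.Ioo s u := by
      intro x hx
      simp only [hF'def, Finset.coe_image, Set.mem_image] at hx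
      obtain ⟨w, _, rfl⟩ := hx
      exact w.2
    set m : ℝ := (insert s F').max' (Finset.insert_nonempty _ _) with hm
    have hmu : m < u := by
      have := (insert s F').max'_mem (Finset.insert_nonempty _ _)
      rw [← hm] at this
      rcases Finset.mem_insert.1 this with h | h
      · rw [h]; exact hu.1
      · exact (hF'sub h).2
    filter_upwards [Ioo_mem_nhdsLT_of_mem ⟨hmu, le_rfl⟩] with v hv
    have hsub : ↑F' ⊆ Set.Ioc s v := by
      intro x hx
      refine ⟨(hF'sub hx).1, ?_⟩
      have : x ≤ m := Finset.le_max' _ _ (Finset.mem_insert_of_mem hx)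
      exact this.trans hv.1.le
    have hmemIocv : ∀ i ∈ Set.Ioc s v, (1 - Jf Λ i) ∈ Set.Icc (0:ℝ) 1 := by
      intro i hi
      exact factor_mem01' hjump i
        (Ioc_subset_Ioo_main le_rfl (hv.2.trans hu.2) hi)
    have h2 : ∏' w : Set.Ioc s v, (1 - Jf Λ w.1) ≤ ∏ x ∈ F', (1 - Jf Λ x) :=
      prod01_tprod_le_prod_of_subset hmemIocv F' hsub
    rw [hF'prod] at h2
    exact lt_of_le_of_lt h2 hF

lemma tendsto_Pf (hjump : ∀ u ∈ Set.Ioo s ρ, (Λ : ℝ → ℝ) u - leftLim (Λ : ℝ → ℝ) u ≤ 1)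
    (hΛc_cont : ContinuousOn Λc (Set.Ico s ρ))
    {u : ℝ} (hu : u ∈ Set.Ioo s ρ) :
    Filter.Tendsto (fun v => Pf Λ Λc s v) (nhdsWithin u (Set.Iio u))
      (nhds (Lf Λ Λc s u)) := by
  have hle : nhdsWithin u (Set.Iio u) ≤ nhdsWithin u (Set.Ico s ρ) := by
    apply nhdsWithin_le_iff.2
    exact Filter.mem_of_superset (Ioo_mem_nhdsLT_of_mem ⟨hu.1, le_rfl⟩)
      (fun x hx => ⟨hx.1.le, hx.2.trans hu.2⟩)
  have hΛcu : Filter.Tendsto Λc (nhdsWithin u (Set.Iio u)) (nhds (Λc u)) :=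
    (hΛc_cont u ⟨hu.1.le, hu.2⟩).mono_left hle
  have hexp : Filter.Tendsto (fun v => Real.exp (-(Λc v - Λc s)))
      (nhdsWithin u (Set.Iio u)) (nhds (Real.exp (-(Λc u - Λc s)))) :=
    (Real.continuous_exp.continuousAt.tendsto).comp
      ((hΛcu.sub tendsto_const_nhds).neg)
  exact hexp.mul (tendsto_W hjump hu)

lemma leftLim_p_eq {p : ℝ → ℝ}
    (hp : ∀ t ∈ Set.Ico s ρ,
      p t = Real.exp (-(Λc t - Λc s))
        * ∏' u : (Set.Ioc s t), (1 - ((Λ : ℝ → ℝ) u.1 - leftLim (Λ : ℝ → ℝ) u.1)))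
    (hjump : ∀ u ∈ Set.Ioo s ρ, (Λ : ℝ → ℝ) u - leftLim (Λ : ℝ → ℝ) u ≤ 1)
    (hΛc_cont : ContinuousOn Λc (Set.Ico s ρ))
    {u : ℝ} (hu : u ∈ Set.Ioo s ρ) :
    leftLim p u = Lf Λ Λc s u := by
  apply leftLim_eq_of_tendsto (h := nhdsWithin_Iio_neBot (le_refl u))
  have hev : p =ᶠ[nhdsWithin u (Set.Iio u)] (fun v => Pf Λ Λc s v) := by
    filter_upwards [Ioo_mem_nhdsLT_of_mem ⟨hu.1, le_rfl⟩] with v hv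
    exact hp v ⟨hv.1.le, hv.2.trans hu.2⟩
  exact (tendsto_Pf hjump hΛc_cont hu).congr' hev.symm

lemma Lf_le_Pf_of_lt (hjump : ∀ u ∈ Set.Ioo s ρ, (Λ : ℝ → ℝ) u - leftLim (Λ : ℝ → ℝ) u ≤ 1)
    (hdc : ∀ t ∈ Set.Ico s ρ,
      (Λ : ℝ → ℝ) t = Λ s + (Λc t - Λc s) + ∑' u : (Set.Ioc s t), Jf Λ u.1)
    (hΛc_cont : ContinuousOn Λc (Set.Ico s ρ))
    {v u : ℝ} (hsv : s ≤ v) (hvu : v < u) (hu : u ∈ Set.Ioo s ρ) :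
    Lf Λ Λc s u ≤ Pf Λ Λc s v := by
  apply le_of_tendsto (tendsto_Pf hjump hΛc_cont hu)
  filter_upwards [Ioo_mem_nhdsLT_of_mem ⟨hvu, le_rfl⟩] with w hw
  exact Pf_anti hjump hdc hsv hw.1.le (hw.2.trans hu.2)

lemma Lf_anti (hjump : ∀ u ∈ Set.Ioo s ρ, (Λ : ℝ → ℝ) u - leftLim (Λ : ℝ → ℝ) u ≤ 1)
    (hdc : ∀ t ∈ Set.Ico s ρ,
      (Λ : ℝ → ℝ) t = Λ s + (Λc t - Λc s) + ∑' u : (Set.Ioc s t), Jf Λ u.1)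
    (hΛc_cont : ContinuousOn Λc (Set.Ico s ρ))
    {u v : ℝ} (hu : u ∈ Set.Ioo s ρ) (hv : v ∈ Set.Ioo s ρ) (huv : u ≤ v) :
    Lf Λ Λc s v ≤ Lf Λ Λc s u := by
  rcases eq_or_lt_of_le huv with rfl | hlt
  · exact le_rfl
  · calc Lf Λ Λc s v ≤ Pf Λ Λc s u :=
        Lf_le_Pf_of_lt hjump hdc hΛc_cont hu.1.le hlt hv
      _ ≤ Lf Λ Λc s u := Pf_le_Lf hjump hdc hu

end Core3

noncomputable section GDef
/-- globally antitone version of `leftLim p` -/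
def gf (Λ : StieltjesFunction ℝ) (Λc : ℝ → ℝ) (s t : ℝ) : ℝ → ℝ :=
  fun u => if u ≤ s then 1 else Lf Λ Λc s (min u t)
end GDef

section GLemmas

variable {s ρ : ℝ} {Λ : StieltjesFunction ℝ} {Λc : ℝ → ℝ}

lemma min_mem_Ioo {u t : ℝ} (hst : s < t) (htρ : t < ρ) (hu : s < u) :
    min u t ∈ Set.Ioo s ρ :=
  ⟨lt_min hu hst, lt_of_le_of_lt (min_le_right u t) htρ⟩

lemma gf_anti (hjump : ∀ u ∈ Set.Ioo s ρ, (Λ : ℝ → ℝ) u - leftLim (Λ : ℝ → ℝ) u ≤ 1)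
    (hdc : ∀ t ∈ Set.Ico s ρ,
      (Λ : ℝ → ℝ) t = Λ s + (Λc t - Λc s) + ∑' u : (Set.Ioc s t), Jf Λ u.1)
    (hΛc_cont : ContinuousOn Λc (Set.Ico s ρ))
    {t : ℝ} (hst : s < t) (htρ : t < ρ) : Antitone (gf Λ Λc s t) := by
  intro u v huv
  unfold gf
  by_cases hv : v ≤ s
  · rw [if_pos hv, if_pos (huv.trans hv)]
  · rw [if_neg hv]
    push_neg at hv
    by_cases hu : u ≤ s
    · rw [if_pos hu]
      exact (Lf_mem01 hjump hdc (min_mem_Ioo hst htρ hv)).2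
    · rw [if_neg hu]
      push_neg at hu
      exact Lf_anti hjump hdc hΛc_cont (min_mem_Ioo hst htρ hu)
        (min_mem_Ioo hst htρ hv) (min_le_min huv le_rfl)

lemma gf_mem01 (hjump : ∀ u ∈ Set.Ioo s ρ, (Λ : ℝ → ℝ) u - leftLim (Λ : ℝ → ℝ) u ≤ 1)
    (hdc : ∀ t ∈ Set.Ico s ρ,
      (Λ : ℝ → ℝ) t = Λ s + (Λc t - Λc s) + ∑' u : (Set.Ioc s t), Jf Λ u.1)
    {t : ℝ} (hst : s < t) (htρ : t < ρ) (u : ℝ) :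
    gf Λ Λc s t u ∈ Set.Icc (0:ℝ) 1 := by
  unfold gf
  by_cases hu : u ≤ s
  · rw [if_pos hu]; exact ⟨zero_le_one, le_rfl⟩
  · rw [if_neg hu]
    push_neg at hu
    exact Lf_mem01 hjump hdc (min_mem_Ioo hst htρ hu)

lemma gf_eq (hst : s < t) {u : ℝ} (hu : u ∈ Set.Ioc s t) :
    gf Λ Λc s t u = Lf Λ Λc s u := by
  unfold gf
  rw [if_neg (not_le.2 hu.1), min_eq_left hu.2]

lemma gf_integrableOn (hjump : ∀ u ∈ Set.Ioo s ρ, (Λ : ℝ → ℝ) u - leftLim (Λ : ℝ → ℝ) u ≤ 1)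
    (hdc : ∀ t ∈ Set.Ico s ρ,
      (Λ : ℝ → ℝ) t = Λ s + (Λc t - Λc s) + ∑' u : (Set.Ioc s t), Jf Λ u.1)
    (hΛc_cont : ContinuousOn Λc (Set.Ico s ρ))
    {t : ℝ} (hst : s < t) (htρ : t < ρ) {A : Set ℝ} (hA : A ⊆ Set.Ioc s t) :
    IntegrableOn (gf Λ Λc s t) A Λ.measure := by
  have hsub : IntegrableOn (gf Λ Λc s t) (Set.Ioc s t) Λ.measure := by
    apply Integrable.mono' (g := fun _ => (1:ℝ))
    · exact integrableOn_const (by rw [Λ.measure_Ioc]; exact ENNReal.ofReal_ne_top)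
    · exact ((gf_anti hjump hdc hΛc_cont hst htρ).measurable).aestronglyMeasurable
    · apply Filter.Eventually.of_forall
      intro x
      have := gf_mem01 hjump hdc hst htρ (u := x)
      rw [Real.norm_eq_abs, abs_le]
      exact ⟨by linarith [this.1], this.2⟩
  exact hsub.mono_set hA

end GLemmas

section PerInterval

variable {s ρ : ℝ} {Λ : StieltjesFunction ℝ} {Λc : ℝ → ℝ}

lemma per_interval (hjump : ∀ u ∈ Set.Ioo s ρ, (Λ : ℝ → ℝ) u - leftLim (Λ : ℝ → ℝ) u ≤ 1)
    (hdc : ∀ t ∈ Set.Ico s ρ,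
      (Λ : ℝ → ℝ) t = Λ s + (Λc t - Λc s) + ∑' u : (Set.Ioc s t), Jf Λ u.1)
    (hΛc_cont : ContinuousOn Λc (Set.Ico s ρ))
    {t a b ε : ℝ} (hst : s < t) (htρ : t < ρ)
    (hsa : s ≤ a) (hab : a < b) (hbt : b ≤ t)
    (hεb : leftLim (Λ : ℝ → ℝ) b ≤ Λ a + ε) :
    |(∫ u in Set.Ioc a b, gf Λ Λc s t u ∂Λ.measure) - (Pf Λ Λc s a - Pf Λ Λc s b)|
      ≤ ε * ((Λ : ℝ → ℝ) b - Λ a) := by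
  have hbρ : b < ρ := lt_of_le_of_lt hbt htρ
  have hbIoo : b ∈ Set.Ioo s ρ := ⟨lt_of_le_of_lt hsa hab, hbρ⟩
  have hIoc_sub : Set.Ioc a b ⊆ Set.Ioc s t :=
    fun x hx => ⟨lt_of_le_of_lt hsa hx.1, hx.2.trans hbt⟩
  have hIoo_sub : Set.Ioo a b ⊆ Set.Ioc s t :=
    fun x hx => hIoc_sub (Set.Ioo_subset_Ioc_self hx)
  -- split the integral
  have hdisj : Disjoint (Set.Ioo a b) ({b} : Set ℝ) := by
    simp [Set.disjoint_singleton_right]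
  have hunion : Set.Ioo a b ∪ {b} = Set.Ioc a b := by
    rw [← Set.Icc_self b, Set.Ioo_union_Icc_eq_Ioc hab le_rfl]
  have hint1 : IntegrableOn (gf Λ Λc s t) (Set.Ioo a b) Λ.measure :=
    gf_integrableOn hjump hdc hΛc_cont hst htρ hIoo_sub
  have hint2 : IntegrableOn (gf Λ Λc s t) ({b} : Set ℝ) Λ.measure :=
    gf_integrableOn hjump hdc hΛc_cont hst htρ
      (by intro x hx; rw [Set.mem_singleton_iff] at hx; subst hx
          exact ⟨lt_of_le_of_lt hsa hab, hbt⟩)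
  have hsplit : (∫ u in Set.Ioc a b, gf Λ Λc s t u ∂Λ.measure)
      = (∫ u in Set.Ioo a b, gf Λ Λc s t u ∂Λ.measure)
        + ∫ u in ({b} : Set ℝ), gf Λ Λc s t u ∂Λ.measure := by
    rw [← hunion]
    exact setIntegral_union hdisj (measurableSet_singleton b) hint1 hint2
  have hgb : gf Λ Λc s t b = Lf Λ Λc s b :=
    gf_eq hst ⟨lt_of_le_of_lt hsa hab, hbt⟩
  have hsing : (∫ u in ({b} : Set ℝ), gf Λ Λc s t u ∂Λ.measure)
      = (Jf Λ b) * Lf Λ Λc s b := by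
    rw [integral_singleton, measureReal_def, hgb, Λ.measure_singleton,
      ENNReal.toReal_ofReal
        (show (0:ℝ) ≤ (Λ : ℝ → ℝ) b - leftLim (Λ : ℝ → ℝ) b from Jf_nonneg Λ b)]
    simp only [smul_eq_mul, Jf]
  -- notation
  set A := Pf Λ Λc s a with hA
  set L := Lf Λ Λc s b with hL
  set D : ℝ := leftLim (Λ : ℝ → ℝ) b - Λ a with hD
  have hD0 : 0 ≤ D := by
    have := Λ.mono.le_leftLim hab
    simp only [hD]; linarith
  have hDε : D ≤ ε := by simp only [hD]; linarith
  have hDD : D ≤ (Λ : ℝ → ℝ) b - Λ a := by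
    have := Λ.mono.leftLim_le (le_refl b)
    simp only [hD]; linarith
  have hmeasIoo : (Λ.measure (Set.Ioo a b)).toReal = D := by
    rw [Λ.measure_Ioo, ENNReal.toReal_ofReal hD0]
  -- bounds on the open integral
  have hA01 : A ∈ Set.Icc (0:ℝ) 1 :=
    Pf_mem01 hjump hdc ⟨hsa, hab.trans hbρ⟩
  have hub : ∀ x ∈ Set.Ioo a b, gf Λ Λc s t x ≤ A := by
    intro x hx
    rw [gf_eq hst (hIoo_sub hx)]
    exact Lf_le_Pf_of_lt hjump hdc hΛc_cont hsa hx.1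
      ⟨lt_of_le_of_lt hsa hx.1, hx.2.trans hbρ⟩
  have hlb : ∀ x ∈ Set.Ioo a b, L ≤ gf Λ Λc s t x := by
    intro x hx
    rw [gf_eq hst (hIoo_sub hx)]
    exact Lf_anti hjump hdc hΛc_cont
      ⟨lt_of_le_of_lt hsa hx.1, hx.2.trans hbρ⟩ hbIoo hx.2.le
  have hintub : (∫ u in Set.Ioo a b, gf Λ Λc s t u ∂Λ.measure) ≤ A * D := by
    calc (∫ u in Set.Ioo a b, gf Λ Λc s t u ∂Λ.measure)
        ≤ ∫ _ in Set.Ioo a b, A ∂Λ.measure :=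
          setIntegral_mono_on hint1 (integrableOn_const
            (by rw [Λ.measure_Ioo]; exact ENNReal.ofReal_ne_top))
            measurableSet_Ioo hub
      _ = (Λ.measure (Set.Ioo a b)).toReal * A := by rw [setIntegral_const, smul_eq_mul, measureReal_def]
      _ = A * D := by rw [hmeasIoo]; ring
  have hintlb : L * D ≤ ∫ u in Set.Ioo a b, gf Λ Λc s t u ∂Λ.measure := by
    calc L * D = (Λ.measure (Set.Ioo a b)).toReal * L := by rw [hmeasIoo]; ring
      _ = ∫ _ in Set.Ioo a b, L ∂Λ.measure := by rw [setIntegral_const, smul_eq_mul, measureReal_def]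
      _ ≤ _ := setIntegral_mono_on (integrableOn_const
            (by rw [Λ.measure_Ioo]; exact ENNReal.ofReal_ne_top))
            hint1 measurableSet_Ioo hlb
  -- bounds relating A, L
  have hLb := Lf_bounds hjump hdc hsa hab hbρ
  have hLb1 : A * (1 - D) ≤ L := by rw [hA, hL, hD]; exact hLb.1
  have hLb2 : L ≤ A * (1 - D + D^2) := by rw [hA, hL, hD]; exact hLb.2
  have hL0 : 0 ≤ L := (Lf_mem01 hjump hdc hbIoo).1
  -- point identity
  have hpoint : Pf Λ Λc s b = L * (1 - Jf Λ b) := Pf_point hjump hbIoo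
  have hJ0 : 0 ≤ Jf Λ b := Jf_nonneg Λ b
  -- assemble
  rw [hsplit, hsing, hpoint]
  have hexp : (∫ u in Set.Ioo a b, gf Λ Λc s t u ∂Λ.measure) + Jf Λ b * L
      - (A - L * (1 - Jf Λ b))
      = (∫ u in Set.Ioo a b, gf Λ Λc s t u ∂Λ.measure) - (A - L) := by ring
  rw [hexp, abs_le]
  have hε0 : 0 ≤ ε := hD0.trans hDε
  have hsq : D ^ 2 = D * D := sq D
  have e2 : A * D * D ≤ D * D := by nlinarith [hA01.1, hA01.2, hD0]
  have e3 : D * D ≤ ε * D := mul_le_mul_of_nonneg_right hDε hD0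
  have e4 : ε * D ≤ ε * ((Λ : ℝ → ℝ) b - Λ a) := mul_le_mul_of_nonneg_left hDD hε0
  constructor
  · have h1 : A - L ≤ A * D := by nlinarith [hLb1]
    have h2 : (A - L) - (∫ u in Set.Ioo a b, gf Λ Λc s t u ∂Λ.measure) ≤ (A - L) * D := by
      nlinarith [hintlb, h1]
    have e1 : (A - L) * D ≤ (A * D) * D := mul_le_mul_of_nonneg_right h1 hD0
    linarith
  · have h1 : A * (D - D^2) ≤ A - L := by nlinarith [hLb2]
    have f1 : (∫ u in Set.Ioo a b, gf Λ Λc s t u ∂Λ.measure) - (A - L)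
        ≤ A * D - A * (D - D^2) := by linarith [hintub]
    have f2 : A * D - A * (D - D^2) = A * D * D := by ring
    linarith

end PerInterval

section Partition

lemma stieltjes_right_tendsto (Λ : StieltjesFunction ℝ) (a : ℝ) :
    Filter.Tendsto (Λ : ℝ → ℝ) (nhdsWithin a (Set.Ioi a)) (nhds (Λ a)) :=
  (Λ.right_continuous a).mono_left (nhdsWithin_mono a Set.Ioi_subset_Ici_self)

lemma partition_exists (Λ : StieltjesFunction ℝ) {s t ε : ℝ} (hst : s < t) (hε : 0 < ε) :
    ∃ n : ℕ, ∃ τ : ℕ → ℝ, τ 0 = s ∧ τ n = t ∧ (∀ i, s ≤ τ i ∧ τ i ≤ t) ∧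
      ∀ i, (τ i = t ∧ τ (i+1) = t) ∨
        (τ i < τ (i+1) ∧ leftLim (Λ : ℝ → ℝ) (τ (i+1)) ≤ Λ (τ i) + ε) := by
  classical
  -- the greedy step
  set S : ℝ → Set ℝ := fun a => {u ∈ Set.Ioc a t | Λ u ≤ Λ a + ε} with hS
  set nxt : ℝ → ℝ := fun a => if a < t then sSup (S a) else t with hnxt
  have hSne : ∀ a, s ≤ a → a < t → (S a).Nonempty := by
    intro a _ hat
    have h1 : (Λ : ℝ → ℝ) ⁻¹' (Set.Iio (Λ a + ε)) ∈ nhdsWithin a (Set.Ioi a) :=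
      stieltjes_right_tendsto Λ a (Iio_mem_nhds (by linarith))
    have h2 : Set.Ioo a t ∈ nhdsWithin a (Set.Ioi a) := Ioo_mem_nhdsGT hat
    have := Filter.inter_mem h1 h2
    obtain ⟨u, hu1, hu2⟩ := Filter.nonempty_of_mem this
    exact ⟨u, ⟨⟨hu2.1, hu2.2.le⟩, le_of_lt hu1⟩⟩
  have hSbdd : ∀ a, BddAbove (S a) := fun a => ⟨t, fun u hu => hu.1.2⟩
  have hnxt_props : ∀ a, s ≤ a → a < t →
      a < nxt a ∧ nxt a ≤ t ∧ leftLim (Λ : ℝ → ℝ) (nxt a) ≤ Λ a + ε ∧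
        (nxt a < t → Λ a + ε ≤ Λ (nxt a)) := by
    intro a hsa hat
    have hne := hSne a hsa hat
    have hbdd := hSbdd a
    have hnxt_eq : nxt a = sSup (S a) := if_pos hat
    obtain ⟨u, hu⟩ := hne
    have hau : a < u := hu.1.1
    have hule : u ≤ sSup (S a) := le_csSup hbdd hu
    have h1 : a < nxt a := by rw [hnxt_eq]; exact lt_of_lt_of_le hau hule
    have h2 : nxt a ≤ t := by
      rw [hnxt_eq]; exact csSup_le ⟨u, hu⟩ (fun v hv => hv.1.2)
    have hmid : ∀ v ∈ Set.Ioo a (nxt a), (Λ : ℝ → ℝ) v ≤ Λ a + ε := by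
      intro v hv
      have hv2 : v < sSup (S a) := by rw [← hnxt_eq]; exact hv.2
      obtain ⟨w, hwS, hvw⟩ := exists_lt_of_lt_csSup ⟨u, hu⟩ hv2
      exact (Λ.mono hvw.le).trans hwS.2
    have h3 : leftLim (Λ : ℝ → ℝ) (nxt a) ≤ Λ a + ε := by
      apply le_of_tendsto (Λ.mono.tendsto_leftLim (nxt a))
      filter_upwards [Ioo_mem_nhdsLT_of_mem ⟨h1, le_rfl⟩] with v hv
      exact hmid v hv
    have h4 : nxt a < t → Λ a + ε ≤ Λ (nxt a) := by
      intro hnt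
      apply ge_of_tendsto (stieltjes_right_tendsto Λ (nxt a))
      filter_upwards [Ioo_mem_nhdsGT hnt] with v hv
      by_contra hcon
      push_neg at hcon
      have hvS : v ∈ S a := ⟨⟨h1.trans hv.1, hv.2.le⟩, hcon.le⟩
      have : v ≤ sSup (S a) := le_csSup hbdd hvS
      rw [← hnxt_eq] at this
      exact absurd hv.1 (not_lt.2 this)
    exact ⟨h1, h2, h3, h4⟩
  have hnxt_top : ∀ a, ¬ a < t → nxt a = t := fun a ha => if_neg ha
  -- iterate
  set τ : ℕ → ℝ := fun n => nxt^[n] s with hτ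
  have hτ0 : τ 0 = s := rfl
  have hτsucc : ∀ i, τ (i+1) = nxt (τ i) := by
    intro i
    simp only [hτ, Function.iterate_succ_apply']
  have hτmem : ∀ i, s ≤ τ i ∧ τ i ≤ t := by
    intro i
    induction i with
    | zero => exact ⟨le_rfl, hst.le⟩
    | succ k ih =>
      rw [hτsucc k]
      by_cases hk : τ k < t
      · obtain ⟨h1, h2, _, _⟩ := hnxt_props (τ k) ih.1 hk
        exact ⟨ih.1.trans h1.le, h2⟩
      · rw [hnxt_top _ hk]
        exact ⟨hst.le, le_rfl⟩
  have hstep : ∀ i, (τ i = t ∧ τ (i+1) = t) ∨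
      (τ i < τ (i+1) ∧ leftLim (Λ : ℝ → ℝ) (τ (i+1)) ≤ Λ (τ i) + ε) := by
    intro i
    by_cases hk : τ i < t
    · obtain ⟨h1, _, h3, _⟩ := hnxt_props (τ i) (hτmem i).1 hk
      right
      rw [hτsucc i]
      exact ⟨h1, h3⟩
    · left
      have h1 : τ i = t := le_antisymm (hτmem i).2 (not_lt.1 hk)
      exact ⟨h1, by rw [hτsucc i, hnxt_top _ hk]⟩
  have hlt_of_lt : ∀ k, τ (k+1) < t → τ k < t := by
    intro k hk1
    by_contra hk
    rw [hτsucc k, hnxt_top _ hk] at hk1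
    exact lt_irrefl t hk1
  have hgrow : ∀ i : ℕ, τ i < t → Λ s + i * ε ≤ Λ (τ i) := by
    intro i
    induction i with
    | zero => intro _; simp [hτ0]
    | succ k ih =>
      intro hk1
      have hk : τ k < t := hlt_of_lt k hk1
      obtain ⟨_, _, _, h4⟩ := hnxt_props (τ k) (hτmem k).1 hk
      have h5 : Λ (τ k) + ε ≤ Λ (τ (k+1)) := by
        rw [hτsucc k]
        exact h4 (by rw [← hτsucc k]; exact hk1)
      have := ih hk
      push_cast
      linarith
  set N : ℕ := ⌈((Λ : ℝ → ℝ) t - Λ s)/ε⌉₊ + 1 with hN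
  have hτN : τ N = t := by
    by_contra hne
    have hltN : τ N < t := lt_of_le_of_ne (hτmem N).2 hne
    have h1 := hgrow N hltN
    have h2 : (Λ : ℝ → ℝ) (τ N) ≤ Λ t := Λ.mono (hτmem N).2
    have h3 : ((Λ : ℝ → ℝ) t - Λ s)/ε ≤ (⌈((Λ : ℝ → ℝ) t - Λ s)/ε⌉₊ : ℝ) :=
      Nat.le_ceil _
    have h4 : ((Λ : ℝ → ℝ) t - Λ s)/ε * ε = (Λ : ℝ → ℝ) t - Λ s :=
      div_mul_cancel₀ _ (ne_of_gt hε)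
    have h5 : (N : ℝ) = (⌈((Λ : ℝ → ℝ) t - Λ s)/ε⌉₊ : ℝ) + 1 := by
      rw [hN]; push_cast; ring
    nlinarith
  exact ⟨N, τ, hτ0, hτN, hτmem, hstep⟩

end Partition

section MainEstimate

variable {s ρ : ℝ} {Λ : StieltjesFunction ℝ} {Λc : ℝ → ℝ}

lemma main_estimate (hjump : ∀ u ∈ Set.Ioo s ρ, (Λ : ℝ → ℝ) u - leftLim (Λ : ℝ → ℝ) u ≤ 1)
    (hdc : ∀ t ∈ Set.Ico s ρ,
      (Λ : ℝ → ℝ) t = Λ s + (Λc t - Λc s) + ∑' u : (Set.Ioc s t), Jf Λ u.1)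
    (hΛc_cont : ContinuousOn Λc (Set.Ico s ρ))
    {t ε : ℝ} (hst : s < t) (htρ : t < ρ) (hε : 0 < ε) :
    |(∫ u in Set.Ioc s t, gf Λ Λc s t u ∂Λ.measure) - (1 - Pf Λ Λc s t)|
      ≤ ε * ((Λ : ℝ → ℝ) t - Λ s) := by
  obtain ⟨n, τ, hτ0, hτn, hτmem, hstep⟩ := partition_exists Λ hst hε
  have key : ∀ k : ℕ,
      |(∫ u in Set.Ioc s (τ k), gf Λ Λc s t u ∂Λ.measure) - (1 - Pf Λ Λc s (τ k))|
        ≤ ε * ((Λ : ℝ → ℝ) (τ k) - Λ s) := by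
    intro k
    induction k with
    | zero =>
      rw [hτ0, Set.Ioc_self]
      simp [Pf_self]
    | succ k ih =>
      rcases hstep k with ⟨h1, h2⟩ | ⟨h1, h2⟩
      · have h12 : τ (k+1) = τ k := h2.trans h1.symm
        rw [h12]
        exact ih
      · have hsa : s ≤ τ k := (hτmem k).1
        have hbt : τ (k+1) ≤ t := (hτmem (k+1)).2
        have hIsub1 : Set.Ioc s (τ k) ⊆ Set.Ioc s t :=
          Set.Ioc_subset_Ioc le_rfl (hτmem k).2
        have hIsub2 : Set.Ioc (τ k) (τ (k+1)) ⊆ Set.Ioc s t :=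
          fun x hx => ⟨lt_of_le_of_lt hsa hx.1, hx.2.trans hbt⟩
        have hint1 := gf_integrableOn hjump hdc hΛc_cont hst htρ hIsub1
        have hint2 := gf_integrableOn hjump hdc hΛc_cont hst htρ hIsub2
        have hsplit : (∫ u in Set.Ioc s (τ (k+1)), gf Λ Λc s t u ∂Λ.measure)
            = (∫ u in Set.Ioc s (τ k), gf Λ Λc s t u ∂Λ.measure)
              + ∫ u in Set.Ioc (τ k) (τ (k+1)), gf Λ Λc s t u ∂Λ.measure := by
          rw [← Set.Ioc_union_Ioc_eq_Ioc hsa h1.le]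
          exact setIntegral_union (Set.Ioc_disjoint_Ioc_of_le le_rfl) measurableSet_Ioc hint1 hint2
        have hper := per_interval hjump hdc hΛc_cont hst htρ hsa h1 hbt h2
        rw [hsplit]
        have htri : |(∫ u in Set.Ioc s (τ k), gf Λ Λc s t u ∂Λ.measure)
              + (∫ u in Set.Ioc (τ k) (τ (k+1)), gf Λ Λc s t u ∂Λ.measure)
              - (1 - Pf Λ Λc s (τ (k+1)))|
            ≤ |(∫ u in Set.Ioc s (τ k), gf Λ Λc s t u ∂Λ.measure) - (1 - Pf Λ Λc s (τ k))|
              + |(∫ u in Set.Ioc (τ k) (τ (k+1)), gf Λ Λc s t u ∂Λ.measure)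
                  - (Pf Λ Λc s (τ k) - Pf Λ Λc s (τ (k+1)))| := by
          have := abs_add_le
            ((∫ u in Set.Ioc s (τ k), gf Λ Λc s t u ∂Λ.measure) - (1 - Pf Λ Λc s (τ k)))
            ((∫ u in Set.Ioc (τ k) (τ (k+1)), gf Λ Λc s t u ∂Λ.measure)
              - (Pf Λ Λc s (τ k) - Pf Λ Λc s (τ (k+1))))
          calc |(∫ u in Set.Ioc s (τ k), gf Λ Λc s t u ∂Λ.measure)
                + (∫ u in Set.Ioc (τ k) (τ (k+1)), gf Λ Λc s t u ∂Λ.measure)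
                - (1 - Pf Λ Λc s (τ (k+1)))|
              = |((∫ u in Set.Ioc s (τ k), gf Λ Λc s t u ∂Λ.measure) - (1 - Pf Λ Λc s (τ k)))
                + ((∫ u in Set.Ioc (τ k) (τ (k+1)), gf Λ Λc s t u ∂Λ.measure)
                  - (Pf Λ Λc s (τ k) - Pf Λ Λc s (τ (k+1))))| := by ring_nf
            _ ≤ _ := this
        refine htri.trans ?_
        have hmono : (Λ : ℝ → ℝ) (τ k) ≤ Λ (τ (k+1)) := Λ.mono h1.le
        linarith [ih, hper]
  have := key n
  rwa [hτn] at this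

end MainEstimate


/-- Relation between the survival function `p` of the first jump time and its
distribution function `q`: with `p` the product-integral of the cumulative
hazard `Λ` and `q t = ∫_(s,t] p(u-) dΛ(u)`, one has `q = 1 - p` on `[s,ρ)`,
and in particular `0 ≤ p ≤ 1` and `0 ≤ q ≤ 1` there. -/
theorem stmt_4 (s ρ : ℝ) (hsρ : s < ρ) (Λ : StieltjesFunction ℝ) (hΛs : Λ s = 0)
    (hjump : ∀ u ∈ Set.Ioo s ρ, (Λ : ℝ → ℝ) u - leftLim (Λ : ℝ → ℝ) u ≤ 1)
    (Λc : ℝ → ℝ) (hΛc_cont : ContinuousOn Λc (Set.Ico s ρ))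
    (hΛc_decomp : ∀ t ∈ Set.Ico s ρ,
      (Λ : ℝ → ℝ) t = Λ s + (Λc t - Λc s)
        + ∑' u : (Set.Ioc s t), ((Λ : ℝ → ℝ) u.1 - leftLim (Λ : ℝ → ℝ) u.1))
    (p q : ℝ → ℝ)
    (hp : ∀ t ∈ Set.Ico s ρ,
      p t = Real.exp (-(Λc t - Λc s))
        * ∏' u : (Set.Ioc s t), (1 - ((Λ : ℝ → ℝ) u.1 - leftLim (Λ : ℝ → ℝ) u.1)))
    (hq : ∀ t ∈ Set.Ico s ρ,
      q t = ∫ u in Set.Ioc s t, leftLim p u ∂Λ.measure) :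
    ∀ t ∈ Set.Ico s ρ,
      q t = 1 - p t ∧ p t ∈ Set.Icc (0 : ℝ) 1 ∧ q t ∈ Set.Icc (0 : ℝ) 1 := by
  have hdc : ∀ t ∈ Set.Ico s ρ,
      (Λ : ℝ → ℝ) t = Λ s + (Λc t - Λc s) + ∑' u : (Set.Ioc s t), Jf Λ u.1 :=
    hΛc_decomp
  have hpP : ∀ u ∈ Set.Ico s ρ, p u = Pf Λ Λc s u := hp
  intro t ht
  have hpt01 : p t ∈ Set.Icc (0:ℝ) 1 := by
    rw [hpP t ht]
    exact Pf_mem01 hjump hdc ht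
  rcases eq_or_lt_of_le ht.1 with heq | hst
  · -- t = s
    subst heq
    have hq0 : q s = 0 := by
      rw [hq s ht, Set.Ioc_self]
      simp
    have hp1 : p s = 1 := by
      rw [hpP s ht, Pf_self]
    refine ⟨by rw [hq0, hp1]; ring, hpt01, by rw [hq0]; exact ⟨le_rfl, zero_le_one⟩⟩
  · -- s < t
    have htρ : t < ρ := ht.2
    have hqg : q t = ∫ u in Set.Ioc s t, gf Λ Λc s t u ∂Λ.measure := by
      rw [hq t ht]
      apply setIntegral_congr_fun measurableSet_Ioc
      intro u hu
      have huIoo : u ∈ Set.Ioo s ρ := ⟨hu.1, lt_of_le_of_lt hu.2 htρ⟩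
      rw [leftLim_p_eq hp hjump hΛc_cont huIoo, gf_eq hst hu]
    have hqp : q t = 1 - p t := by
      have hbound : ∀ ε : ℝ, 0 < ε → |q t - (1 - p t)| ≤ ε * ((Λ : ℝ → ℝ) t - Λ s) := by
        intro ε hε
        rw [hqg, hpP t ht]
        exact main_estimate hjump hdc hΛc_cont hst htρ hε
      set C : ℝ := (Λ : ℝ → ℝ) t - Λ s with hC
      have hC0 : 0 ≤ C := by
        have := Λ.mono hst.le
        simp only [hC]; linarith
      by_contra hne
      have hXpos : 0 < |q t - (1 - p t)| := abs_pos.2 (sub_ne_zero.2 hne)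
      set X := |q t - (1 - p t)| with hX
      have hb := hbound (X / (2 * (C + 1))) (by positivity)
      have hfrac : X / (2 * (C + 1)) * C < X := by
        rw [div_mul_eq_mul_div, div_lt_iff₀ (by positivity)]
        nlinarith
      linarith
    exact ⟨hqp, hpt01, by
      constructor
      · rw [hqp]; linarith [hpt01.2]
      · rw [hqp]; linarith [hpt01.1]⟩
end

section
/- In the canonical filtration setting, for each t ∈ [0,∞) and n ∈ ℕ₀, the trace σ-algebras satisfy 𝒢_n ∩ {τ_n ≤ t < τ_{n+1}} = ℱ_t ∩ {τ_n ≤ t < τ_{n+1}}, where 𝒢_n = σ((τ_k, ζ_k) : k ≤ n) and ℱ_t = σ(1_{τ_k ≤ t}(τ_k, ζ_k) : k ∈ ℕ₀). -/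
open scoped ENNReal
open Classical MeasurableSpace

/-- Measurable structure on an `Option` type: a set is measurable iff its
preimage under `some` is measurable (the cemetery point `none` is measurable). -/
instance optionMeasurableSpace {α : Type*} [MeasurableSpace α] :
    MeasurableSpace (Option α) :=
  MeasurableSpace.map some ‹MeasurableSpace α›

/-- The canonical space of marked point process trajectories with marks in `S`
(the cemetery mark `∇` is encoded by `none`). -/
def IsCanonPath {S : Type*} (t : ℕ → ℝ≥0∞) (z : ℕ → Option S) : Prop :=
  t 0 = 0 ∧ (∀ k, t k < ⊤ → t k < t (k + 1)) ∧ (∀ k, t k = ⊤ → t (k + 1) = ⊤) ∧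
    (∀ k, t k < ⊤ → (z k).isSome) ∧ (∀ k, t k = ⊤ → z k = none) ∧
    (∀ k, t (k + 1) < ⊤ → z k ≠ z (k + 1)) ∧ (⨆ k, t k) = ⊤

/-- The canonical trajectory space `Ω`. -/
def Traj (S : Type*) : Type _ :=
  {ω : (ℕ → ℝ≥0∞) × (ℕ → Option S) // IsCanonPath ω.1 ω.2}

/-- The `k`-th jump time. -/
def jumpTime {S : Type*} (k : ℕ) (ω : Traj S) : ℝ≥0∞ := ω.1.1 k

/-- The `k`-th mark. -/
def mark {S : Type*} (k : ℕ) (ω : Traj S) : Option S := ω.1.2 k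

/-- The σ-algebra `𝒢 n = σ((τ_k, ζ_k) : k ≤ n)` generated by the first `n + 1`
points of the marked point process. -/
def sigmaG (S : Type*) [MeasurableSpace S] (n : ℕ) : MeasurableSpace (Traj S) :=
  ⨆ k, ⨆ (_ : k ≤ n),
    MeasurableSpace.comap (fun ω => (jumpTime k ω, mark k ω)) inferInstance

/-- The canonical filtration `ℱ_t = σ(1_{τ_k ≤ t}(τ_k, ζ_k) : k ∈ ℕ₀)`,
generated by the jump points killed after time `t`. -/
noncomputable def sigmaF (S : Type*) [MeasurableSpace S] (t : ℝ≥0∞) : MeasurableSpace (Traj S) :=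
  ⨆ k, MeasurableSpace.comap
    (fun ω => if jumpTime k ω ≤ t then some (jumpTime k ω, mark k ω) else none)
    inferInstance

section Stmt11Aux

variable {S : Type*}

lemma jumpTime_step (k : ℕ) (ω : Traj S) : jumpTime k ω ≤ jumpTime (k + 1) ω := by
  obtain ⟨-, hlt, htop, -⟩ := ω.2
  by_cases h : ω.1.1 k = ⊤
  · show ω.1.1 k ≤ ω.1.1 (k + 1)
    rw [htop k h]; exact le_top
  · exact (hlt k (lt_top_iff_ne_top.mpr h)).le

lemma jumpTime_mono {j k : ℕ} (h : j ≤ k) (ω : Traj S) :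
    jumpTime j ω ≤ jumpTime k ω :=
  monotone_nat_of_le_succ (fun m => jumpTime_step m ω) h

/-- The σ-algebra of sets whose trace on `B` coincides with that of an
`m`-measurable set. -/
def traceRel {α : Type*} (m : MeasurableSpace α) (B : Set α) : MeasurableSpace α where
  MeasurableSet' A := ∃ A', m.MeasurableSet' A' ∧ A ∩ B = A' ∩ B
  measurableSet_empty := ⟨∅, m.measurableSet_empty, rfl⟩
  measurableSet_compl := by
    rintro A ⟨A', hA', hAB⟩
    refine ⟨A'ᶜ, m.measurableSet_compl _ hA', ?_⟩
    ext x
    have : x ∈ A ∩ B ↔ x ∈ A' ∩ B := by rw [hAB]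
    simp only [Set.mem_inter_iff, Set.mem_compl_iff] at this ⊢
    tauto
  measurableSet_iUnion := by
    intro f hf
    choose g hg hgB using hf
    refine ⟨⋃ i, g i, MeasurableSet.iUnion hg, ?_⟩
    rw [Set.iUnion_inter, Set.iUnion_inter]
    exact Set.iUnion_congr hgB

lemma traceRel_iff {α : Type*} (m : MeasurableSpace α) (B A : Set α) :
    @MeasurableSet _ (traceRel m B) A ↔ ∃ A', @MeasurableSet _ m A' ∧ A ∩ B = A' ∩ B :=
  Iff.rfl

variable [MeasurableSpace S] (t : ℝ≥0∞) (n : ℕ)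

lemma measurableSet_some_image {α : Type*} [MeasurableSpace α] {M : Set α}
    (hM : MeasurableSet M) : MeasurableSet (some '' M : Set (Option α)) := by
  show MeasurableSet (some ⁻¹' (some '' M))
  rwa [Set.preimage_image_eq _ (Option.some_injective _)]

lemma G_le_traceF :
    sigmaG S n ≤ traceRel (sigmaF S t)
      {ω | jumpTime n ω ≤ t ∧ t < jumpTime (n + 1) ω} := by
  refine iSup_le fun k => iSup_le fun hk => ?_
  rintro A ⟨M, hM, rfl⟩
  rw [traceRel_iff]
  refine ⟨(fun ω => if jumpTime k ω ≤ t then some (jumpTime k ω, mark k ω) else none)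
      ⁻¹' (some '' M), ?_, ?_⟩
  · exact le_iSup (fun k => MeasurableSpace.comap
      (fun ω : Traj S => if jumpTime k ω ≤ t then some (jumpTime k ω, mark k ω) else none)
      inferInstance) k _ ⟨some '' M, measurableSet_some_image hM, rfl⟩
  · ext ω
    simp only [Set.mem_inter_iff, Set.mem_preimage, Set.mem_setOf_eq, and_congr_left_iff]
    rintro ⟨h1, h2⟩
    have hkt : jumpTime k ω ≤ t := le_trans (jumpTime_mono hk ω) h1
    rw [if_pos hkt, (Option.some_injective _).mem_set_image]

lemma F_le_traceG :
    sigmaF S t ≤ traceRel (sigmaG S n)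
      {ω | jumpTime n ω ≤ t ∧ t < jumpTime (n + 1) ω} := by
  refine iSup_le fun k => ?_
  rintro A ⟨M, hM, rfl⟩
  rw [traceRel_iff]
  by_cases hk : k ≤ n
  · refine ⟨(fun ω => (jumpTime k ω, mark k ω)) ⁻¹' (some ⁻¹' M), ?_, ?_⟩
    · exact le_iSup₂ (f := fun k (_ : k ≤ n) => MeasurableSpace.comap
        (fun ω : Traj S => (jumpTime k ω, mark k ω)) inferInstance) k hk _
        ⟨some ⁻¹' M, hM, rfl⟩
    · ext ω
      simp only [Set.mem_inter_iff, Set.mem_preimage, Set.mem_setOf_eq, and_congr_left_iff]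
      rintro ⟨h1, h2⟩
      have hkt : jumpTime k ω ≤ t := le_trans (jumpTime_mono hk ω) h1
      rw [if_pos hkt]
  · refine ⟨if none ∈ M then Set.univ else ∅, ?_, ?_⟩
    · split
      · exact @MeasurableSet.univ _ (sigmaG S n)
      · exact (sigmaG S n).measurableSet_empty
    · ext ω
      simp only [Set.mem_inter_iff, Set.mem_preimage, Set.mem_setOf_eq, and_congr_left_iff]
      rintro ⟨h1, h2⟩
      have hkt : ¬ jumpTime k ω ≤ t := by
        refine not_le.mpr (lt_of_lt_of_le h2 (jumpTime_mono ?_ ω))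
        omega
      rw [if_neg hkt]
      split <;> simp_all

end Stmt11Aux

/-- Trace identity: `𝒢_n ∩ {τ_n ≤ t < τ_{n+1}} = ℱ_t ∩ {τ_n ≤ t < τ_{n+1}}`. -/
theorem stmt_11 {S : Type*} [Fintype S] [MeasurableSpace S]
    (t : ℝ≥0∞) (ht : t ≠ ⊤) (n : ℕ) :
    ∀ C : Set (Traj S),
      (∃ A, @MeasurableSet (Traj S) (sigmaG S n) A ∧
          C = A ∩ {ω | jumpTime n ω ≤ t ∧ t < jumpTime (n + 1) ω})
      ↔ (∃ A, @MeasurableSet (Traj S) (sigmaF S t) A ∧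
          C = A ∩ {ω | jumpTime n ω ≤ t ∧ t < jumpTime (n + 1) ω}) := by
  intro C
  constructor
  · rintro ⟨A, hA, rfl⟩
    obtain ⟨A', hA', hEq⟩ := (traceRel_iff _ _ _).mp (G_le_traceF t n A hA)
    exact ⟨A', hA', hEq⟩
  · rintro ⟨A, hA, rfl⟩
    obtain ⟨A', hA', hEq⟩ := (traceRel_iff _ _ _).mp (F_le_traceG t n A hA)
    exact ⟨A', hA', hEq⟩
end
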